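/- Assume z ≥ 1 and w ≥ 1 (i.e., W ≠ ∅) and q' = q_{u−z} = 0. Let h_1 ≥ 0, s_1 ∈ [1,p], and d_1 ∈ [0, υ−1] be integers. Then there exist an integer h ≥ h_1 and a pair (s,d) ∈ V∖W such that h_1·m_0 + m_{s_1} + d_1·m_n = h·m_0 + g_s + d·m_n. -/

import Mathlib

/-- For `t ≥ 1`, the quotient `q_t` in the division `t = q_t·p + r_t` with `r_t ∈ [1,p]`. -/
def qF (p t : ℕ) : ℕ := (t - 1) / p

/-- For `t ≥ 1`, the remainder `r_t ∈ [1,p]` in the division `t = q_t·p + r_t`. -/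
def rF (p t : ℕ) : ℕ := (t - 1) % p + 1

/-- `g_t = q_t·m_p + m_{r_t}` for `t ≥ 1`, and `g_0 = 0`. -/
def gF (p : ℕ) (m : ℕ → ℕ) (t : ℕ) : ℕ :=
  if t = 0 then 0 else qF p t * m p + m (rF p t)

/-- The set of non-negative integer combinations `Σ_{i=0}^{k} a_i·m_i`. -/
def gammaGen (k : ℕ) (m : ℕ → ℕ) : Set ℕ :=
  {x | ∃ a : ℕ → ℕ, x = ∑ i ∈ Finset.range (k + 1), a i * m i}

lemma qF_rF_eq (p q r : ℕ) (hp : 1 ≤ p) (h1 : 1 ≤ r) (h2 : r ≤ p) :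
    qF p (q * p + r) = q ∧ rF p (q * p + r) = r := by
  have h : q * p + r - 1 = (r - 1) + q * p := by omega
  constructor
  · unfold qF
    rw [h, Nat.add_mul_div_right _ _ (show 0 < p by omega),
      Nat.div_eq_of_lt (by omega)]
    omega
  · unfold rF
    rw [h, Nat.add_mul_mod_self_right, Nat.mod_eq_of_lt (by omega)]
    omega

lemma qF_rF_spec (p t : ℕ) (hp : 1 ≤ p) (ht : 1 ≤ t) :
    qF p t * p + rF p t = t ∧ 1 ≤ rF p t ∧ rF p t ≤ p := by
  unfold qF rF
  have h1 := Nat.div_add_mod (t - 1) p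
  have h2 := Nat.mod_lt (t - 1) (show 0 < p by omega)
  refine ⟨?_, by omega, by omega⟩
  have : (t - 1) / p * p = p * ((t - 1) / p) := by ring
  omega

lemma gF_closed (p : ℕ) (m : ℕ → ℕ) (c : ℕ) (hp : 1 ≤ p)
    (harith : ∀ i ≤ p, m i = m 0 + i * c) (t : ℕ) (ht : 1 ≤ t) :
    gF p m t = (qF p t + 1) * m 0 + t * c := by
  obtain ⟨hqr, hr1, hr2⟩ := qF_rF_spec p t hp ht
  unfold gF
  rw [if_neg (by omega), harith p le_rfl, harith (rF p t) hr2,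
    show t * c = (qF p t * p + rF p t) * c by rw [hqr]]
  ring

lemma gF_add (p : ℕ) (m : ℕ → ℕ) (c : ℕ) (hp : 1 ≤ p)
    (harith : ∀ i ≤ p, m i = m 0 + i * c) (a b : ℕ) (ha : 1 ≤ a) :
    ∃ e ≤ 1, gF p m a + gF p m b = gF p m (a + b) + e * m 0 := by
  rcases Nat.eq_zero_or_pos b with hb | hb
  · refine ⟨0, Nat.zero_le 1, ?_⟩
    subst hb
    simp [gF]
  obtain ⟨hqra, hra1, hra2⟩ := qF_rF_spec p a hp ha
  obtain ⟨hqrb, hrb1, hrb2⟩ := qF_rF_spec p b hp hb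
  have hca := gF_closed p m c hp harith a ha
  have hcb := gF_closed p m c hp harith b hb
  have hcab := gF_closed p m c hp harith (a + b) (by omega)
  by_cases hr : rF p a + rF p b ≤ p
  · have hab : a + b = (qF p a + qF p b) * p + (rF p a + rF p b) := by
      have h' : (qF p a + qF p b) * p + (rF p a + rF p b)
          = (qF p a * p + rF p a) + (qF p b * p + rF p b) := by ring
      rw [h', hqra, hqrb]
    have hq : qF p (a + b) = qF p a + qF p b := by
      rw [hab]; exact (qF_rF_eq p _ _ hp (by omega) hr).1
    refine ⟨1, le_rfl, ?_⟩
    rw [hca, hcb, hcab, hq]; ring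
  · have hab : a + b = (qF p a + qF p b + 1) * p + (rF p a + rF p b - p) := by
      have h' : (qF p a + qF p b + 1) * p + (rF p a + rF p b - p)
          = (qF p a * p + rF p a) + (qF p b * p + rF p b) := by
        zify [show p ≤ rF p a + rF p b by omega]
        ring
      rw [h', hqra, hqrb]
    have hq : qF p (a + b) = qF p a + qF p b + 1 := by
      rw [hab]; exact (qF_rF_eq p _ _ hp (by omega) (by omega)).1
    refine ⟨0, by omega, ?_⟩
    rw [hca, hcb, hcab, hq]; ring

/-- Lemma on reducing `x_0^{h_1} x_{s_1} x_n^{d_1}` when `W ≠ ∅` and `q' = 0`: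
there exist `h ≥ h_1` and `(s,d) ∈ V∖W` with
`h_1·m_0 + m_{s_1} + d_1·m_n = h·m_0 + g_s + d·m_n`. -/
theorem stmt7
    (p n : ℕ) (hp : 1 ≤ p) (hn : n = p + 1)
    (m : ℕ → ℕ) (c : ℕ) (hc : 1 ≤ c) (hm0 : 0 < m 0)
    (harith : ∀ i ≤ p, m i = m 0 + i * c) (hmn : 0 < m n)
    (hgcd : Finset.gcd (Finset.range (n + 1)) m = 1)
    (hminimal : ∀ j ≤ n, ¬ ∃ a : ℕ → ℕ, a j = 0 ∧
        m j = ∑ i ∈ Finset.range (n + 1), a i * m i)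
    (S : Set ℕ)
    (hS : S = {γ | γ ∈ gammaGen n m ∧ ∀ δ ∈ gammaGen n m, δ + m 0 ≠ γ})
    (u : ℕ) (hu : IsLeast {t : ℕ | gF p m t ∉ S} u)
    (v : ℕ) (hv : IsLeast {b : ℕ | 1 ≤ b ∧ b * m n ∈ gammaGen p m} v)
    (lam w mu z : ℕ) (hlam : 1 ≤ lam) (hw : w < v) (hz : z < u)
    (hgu : gF p m u = lam * m 0 + w * m n)
    (hvmn : v * m n = mu * m 0 + gF p m z)
    (V W : Set (ℕ × ℕ))
    (hV : V = {sb | sb.1 < u ∧ sb.2 < v})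
    (hW : W = {sb | u - z ≤ sb.1 ∧ sb.1 < u ∧ v - w ≤ sb.2 ∧ sb.2 < v})
    (q' r' : ℕ) (hq'r' : u - z = q' * p + r') (hr' : 1 ≤ r' ∧ r' ≤ p)
    (hz1 : 1 ≤ z) (hw1 : 1 ≤ w) (hq'0 : q' = 0)
    (h1 s1 d1 : ℕ) (hs1 : 1 ≤ s1 ∧ s1 ≤ p) (hd1 : d1 < v) :
    ∃ h s d : ℕ, h1 ≤ h ∧ (s, d) ∈ V \ W ∧
      h1 * m 0 + m s1 + d1 * m n = h * m 0 + gF p m s + d * m n := by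
  subst hq'0
  simp only [Nat.zero_mul, Nat.zero_add] at hq'r'
  have huz1 : 1 ≤ u - z := by omega
  have hu2 : 2 ≤ u := by omega
  have main : ∀ t, ∀ a b : ℕ, b < v →
      ∃ h s d : ℕ, a ≤ h ∧ s < u ∧ d < v ∧ ¬(u - z ≤ s ∧ v - w ≤ d) ∧
        a * m 0 + gF p m t + b * m n = h * m 0 + gF p m s + d * m n := by
    intro t
    induction t using Nat.strong_induction_on with
    | _ t IH =>
      intro a b hb
      by_cases hcase : u - z ≤ t ∧ v ≤ b + w
      · obtain ⟨htz, hdw⟩ := hcase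
        obtain ⟨e1, he1, hE1⟩ := gF_add p m c hp harith t z (by omega)
        obtain ⟨e2, he2, hE2⟩ := gF_add p m c hp harith u (t - (u - z)) (by omega)
        rw [show u + (t - (u - z)) = t + z by omega] at hE2
        have hstep : a * m 0 + gF p m t + b * m n
            = (a + mu + lam + e1 - e2) * m 0 + gF p m (t - (u - z)) + (b + w - v) * m n := by
          zify [show e2 ≤ a + mu + lam + e1 by omega, hdw] at hE1 hE2 hgu hvmn ⊢
          linear_combination hE1 - hE2 + hgu + hvmn
        obtain ⟨h, s, d, hh, hsu, hdv, hWc, heq⟩ :=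
          IH (t - (u - z)) (by omega) (a + mu + lam + e1 - e2) (b + w - v) (by omega)
        exact ⟨h, s, d, by omega, hsu, hdv, hWc, by rw [hstep, heq]⟩
      · by_cases hA : u ≤ t
        · have hbv : b + w < v := by omega
          obtain ⟨e, he, hE⟩ := gF_add p m c hp harith u (t - u) (by omega)
          rw [show u + (t - u) = t by omega] at hE
          have hstep : a * m 0 + gF p m t + b * m n
              = (a + lam - e) * m 0 + gF p m (t - u) + (b + w) * m n := by
            zify [show e ≤ a + lam by omega] at hE hgu ⊢
            linear_combination hgu - hE
          obtain ⟨h, s, d, hh, hsu, hdv, hWc, heq⟩ :=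
            IH (t - u) (by omega) (a + lam - e) (b + w) hbv
          exact ⟨h, s, d, by omega, hsu, hdv, hWc, by rw [hstep, heq]⟩
        · exact ⟨a, t, b, le_rfl, by omega, hb, by omega, rfl⟩
  have hgs1 : gF p m s1 = m s1 := by
    have h0 : qF p s1 = 0 ∧ rF p s1 = s1 := by
      simpa using qF_rF_eq p 0 s1 hp hs1.1 hs1.2
    unfold gF
    rw [if_neg (by omega), h0.1, h0.2]
    ring
  obtain ⟨h, s, d, hh, hsu, hdv, hWc, heq⟩ := main s1 h1 d1 hd1
  rw [hgs1] at heq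
  refine ⟨h, s, d, hh, ?_, heq⟩
  rw [hV, hW]
  constructor
  · exact ⟨hsu, hdv⟩
  · intro hmem
    exact hWc ⟨hmem.1, hmem.2.2.1⟩
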